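/- Let (x_k), (y_k) be generated by the Chambolle–Pock iteration x_{k+1} = prox_{τf}(x_k − τ L* y_k), y_{k+1} = prox_{σ g*}(y_k + σ L(x_{k+1} + θ(x_{k+1} − x_k))) with τ, σ > 0, let (x⋆, y⋆) be a KKT point (−L*y⋆ ∈ ∂f(x⋆), Lx⋆ ∈ ∂g*(y⋆)), and define F_k = f(x_{k+1}) − f(x⋆) + ⟨L*y⋆, x_{k+1} − x⋆⟩. Then for every nonnegative integer k, F_{k+1} − F_k ≤ −(1/τ)‖x_{k+2} − x_{k+1}‖² + ⟨y⋆ − y_{k+1}, Lx_{k+2} − Lx_{k+1}⟩. -/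

import Mathlib

open scoped RealInnerProductSpace
open Filter Topology

noncomputable section

/-- The convex subdifferential of an extended-real-valued function:
`∂f(x) = { u : ∀ z, f z ≥ f x + ⟪u, z - x⟫ }`. -/
def ESubdiff {E : Type*} [NormedAddCommGroup E] [InnerProductSpace ℝ E]
    (f : E → EReal) (x : E) : Set E :=
  {u | ∀ z : E, f x + ((⟪u, z - x⟫ : ℝ) : EReal) ≤ f z}

/-- Properness of an extended-real-valued function: it never takes the value `⊥`
and is not identically `⊤`. -/
def EProper {E : Type*} (f : E → EReal) : Prop :=
  (∃ x, f x ≠ ⊤) ∧ ∀ x, f x ≠ ⊥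

/-- Convexity of an extended-real-valued function. -/
def EConvex {E : Type*} [NormedAddCommGroup E] [NormedSpace ℝ E] (f : E → EReal) : Prop :=
  ∀ x y : E, ∀ a b : ℝ, 0 ≤ a → 0 ≤ b → a + b = 1 →
    f (a • x + b • y) ≤ (a : EReal) * f x + (b : EReal) * f y

/-- The convex (Fenchel) conjugate `g*(y) = sup_x (⟪x, y⟫ - g x)`. -/
def EConj {E : Type*} [NormedAddCommGroup E] [InnerProductSpace ℝ E]
    (g : E → EReal) (y : E) : EReal :=
  ⨆ x : E, ((⟪x, y⟫ : ℝ) : EReal) - g x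

/-- `IsProx τ f x p` states that `p = prox_{τ f}(x)`, i.e. `p` minimizes
`fun z => f z + (1/(2τ)) ‖z - x‖²`. -/
def IsProx {E : Type*} [NormedAddCommGroup E] [InnerProductSpace ℝ E]
    (τ : ℝ) (f : E → EReal) (x p : E) : Prop :=
  ∀ z : E, f p + ((1 / (2 * τ) * ‖p - x‖ ^ 2 : ℝ) : EReal)
      ≤ f z + ((1 / (2 * τ) * ‖z - x‖ ^ 2 : ℝ) : EReal)

/-- The Lagrangian `𝓛(x, y) = f x + ⟪y, L x⟫ - g*(y)` of the saddle-point problem. -/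
def Lagr {E F : Type*} [NormedAddCommGroup E] [InnerProductSpace ℝ E]
    [NormedAddCommGroup F] [InnerProductSpace ℝ F]
    (f : E → EReal) (gs : F → EReal) (L : E →L[ℝ] F) (x : E) (y : F) : EReal :=
  f x + ((⟪y, L x⟫ : ℝ) : EReal) - gs y


lemma prox_ne_top' {E : Type*} [NormedAddCommGroup E] [InnerProductSpace ℝ E]
    {τ : ℝ} {f : E → EReal} {x p : E} (hp : IsProx τ f x p)
    (hproper : EProper f) : f p ≠ ⊤ := by
  obtain ⟨⟨z₀, hz₀⟩, hbot⟩ := hproper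
  intro htop
  have h := hp z₀
  rw [htop, EReal.top_add_coe] at h
  exact absurd h (not_le.mpr (EReal.add_lt_top hz₀ (EReal.coe_ne_top _)))

lemma prox_subgrad' {E : Type*} [NormedAddCommGroup E] [InnerProductSpace ℝ E]
    {τ : ℝ} (hτ : 0 < τ) {f : E → EReal} (hconv : EConvex f) (hproper : EProper f)
    {x p : E} (hp : IsProx τ f x p) (z : E) :
    f p + ((⟪(1/τ) • (x - p), z - p⟫ : ℝ) : EReal) ≤ f z := by
  have hpt : f p ≠ ⊤ := prox_ne_top' hp hproper
  have hpb : f p ≠ ⊥ := hproper.2 p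
  have hfa : f p = ((f p).toReal : EReal) := (EReal.coe_toReal hpt hpb).symm
  set a : ℝ := (f p).toReal
  rcases eq_or_ne (f z) ⊤ with hzt | hzt
  · rw [hzt]; exact le_top
  have hzb : f z ≠ ⊥ := hproper.2 z
  have hfb : f z = ((f z).toReal : EReal) := (EReal.coe_toReal hzt hzb).symm
  set b : ℝ := (f z).toReal
  rw [hfa, hfb, ← EReal.coe_add, EReal.coe_le_coe_iff]
  set K : ℝ := ‖z - p‖ ^ 2 with hK
  have hK0 : 0 ≤ K := by positivity
  set I : ℝ := ⟪x - p, z - p⟫ with hI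
  have hinner : ⟪(1/τ) • (x - p), z - p⟫ = (1/τ) * I := real_inner_smul_left _ _ _
  rw [hinner]
  have hc0 : 0 < 1 / (2 * τ) := by positivity
  set c : ℝ := 1 / (2 * τ) with hc
  have key : ∀ l : ℝ, 0 < l → l ≤ 1 → a + (1/τ) * I ≤ b + c * l * K := by
    intro l hl0 hl1
    have hq : p + l • (z - p) = (1 - l) • p + l • z := by module
    have hcv := hconv p z (1 - l) l (by linarith) (le_of_lt hl0) (by ring)
    rw [← hq, hfa, hfb] at hcv
    have hcv' : f (p + l • (z - p)) ≤ ((((1-l) * a + l * b : ℝ)) : EReal) := by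
      exact_mod_cast hcv
    have hpr := hp (p + l • (z - p))
    rw [hfa, ← hc] at hpr
    have h2 : ((a + c * ‖p - x‖ ^ 2 : ℝ) : EReal)
        ≤ (((((1-l) * a + l * b) + c * ‖(p + l • (z - p)) - x‖ ^ 2 : ℝ)) : EReal) := by
      rw [EReal.coe_add, EReal.coe_add]
      exact le_trans hpr (add_le_add_left hcv' _)
    rw [EReal.coe_le_coe_iff] at h2
    have hexp : ‖(p + l • (z - p)) - x‖ ^ 2
        = ‖p - x‖ ^ 2 + 2 * (l * ⟪p - x, z - p⟫) + l^2 * K := by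
      have h3 : (p + l • (z - p)) - x = (p - x) + l • (z - p) := by abel
      rw [h3, @norm_add_sq_real, real_inner_smul_right, norm_smul]
      simp [mul_pow, hK]
    rw [hexp] at h2
    have hip : ⟪p - x, z - p⟫ = -I := by rw [hI, ← inner_neg_left]; simp
    rw [hip] at h2
    have hτI : (1/τ) = 2 * c := by rw [hc]; field_simp
    rw [hτI]
    have hml : l * (a + 2*c*I) ≤ l * (b + c * l * K) := by nlinarith [h2]
    have := (mul_le_mul_iff_right₀ hl0).mp hml
    linarith
  refine le_of_forall_pos_le_add ?_
  intro ε hε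
  have hden : 0 < c * K + 1 := by positivity
  set l : ℝ := min 1 (ε / (c * K + 1)) with hl
  have hl0 : 0 < l := lt_min one_pos (div_pos hε hden)
  have hl1 : l ≤ 1 := min_le_left _ _
  have hle : c * l * K ≤ ε := by
    have h1 : l ≤ ε / (c * K + 1) := min_le_right _ _
    have h2 : c * l * K ≤ (ε / (c * K + 1)) * (c * K) := by
      have := mul_le_mul_of_nonneg_right h1 (by positivity : (0:ℝ) ≤ c * K)
      nlinarith [this]
    have h3 : (ε / (c * K + 1)) * (c * K) ≤ ε := by
      rw [div_mul_eq_mul_div, div_le_iff₀ hden]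
      nlinarith [hε.le]
    linarith
  have := key l hl0 hl1
  linarith

theorem Fk_succ_sub_Fk_bound
    {𝓗 𝓖 : Type*}
    [NormedAddCommGroup 𝓗] [InnerProductSpace ℝ 𝓗] [CompleteSpace 𝓗]
    [NormedAddCommGroup 𝓖] [InnerProductSpace ℝ 𝓖] [CompleteSpace 𝓖]
    (f : 𝓗 → EReal) (g : 𝓖 → EReal) (gs : 𝓖 → EReal)
    (hf₁ : EProper f) (hf₂ : EConvex f) (hf₃ : LowerSemicontinuous f)
    (hg₁ : EProper g) (hg₂ : EConvex g) (hg₃ : LowerSemicontinuous g)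
    (hgs : gs = EConj g)
    (L : 𝓗 →L[ℝ] 𝓖) (hL : L ≠ 0)
    (τ σ θ : ℝ) (hτ : 0 < τ) (hσ : 0 < σ)
    (θ : ℝ)
    (xstar : 𝓗) (ystar : 𝓖)
    (hkkt₁ : -((ContinuousLinearMap.adjoint L) ystar) ∈ ESubdiff f xstar)
    (hkkt₂ : L xstar ∈ ESubdiff gs ystar)
    (x : ℕ → 𝓗) (y : ℕ → 𝓖)
    (hx : ∀ k : ℕ, IsProx τ f (x k - τ • (ContinuousLinearMap.adjoint L) (y k)) (x (k + 1)))
    (hy : ∀ k : ℕ,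
      IsProx σ gs (y k + σ • L (x (k + 1) + θ • (x (k + 1) - x k))) (y (k + 1)))
    (F : ℕ → EReal)
    (hF : ∀ k : ℕ, F k = f (x (k + 1)) - f xstar
      + ((⟪(ContinuousLinearMap.adjoint L) ystar, x (k + 1) - xstar⟫ : ℝ) : EReal))
    :
    ∀ k : ℕ, F (k + 1) - F k ≤ ((-(1 / τ) * ‖x (k + 2) - x (k + 1)‖ ^ 2
      + ⟪ystar - y (k + 1), L (x (k + 2)) - L (x (k + 1))⟫ : ℝ) : EReal) := by
  intro k
  have heq : k + 1 + 1 = k + 2 := rfl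
  -- finiteness facts
  have hxs_t : f xstar ≠ ⊤ := by
    obtain ⟨⟨z₀, hz₀⟩, hbot⟩ := hf₁
    intro htop
    have h := hkkt₁ z₀
    rw [htop, EReal.top_add_coe] at h
    exact hz₀ (top_le_iff.mp h)
  have hxs_b : f xstar ≠ ⊥ := hf₁.2 _
  have hA_t : f (x (k+1)) ≠ ⊤ := prox_ne_top' (hx k) hf₁
  have hB_t : f (x (k+2)) ≠ ⊤ := by
    have := prox_ne_top' (hx (k+1)) hf₁
    rwa [heq] at this
  have hfs : f xstar = ((f xstar).toReal : EReal) := (EReal.coe_toReal hxs_t hxs_b).symm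
  have hfa : f (x (k+1)) = ((f (x (k+1))).toReal : EReal) :=
    (EReal.coe_toReal hA_t (hf₁.2 _)).symm
  have hfb : f (x (k+2)) = ((f (x (k+2))).toReal : EReal) :=
    (EReal.coe_toReal hB_t (hf₁.2 _)).symm
  set s : ℝ := (f xstar).toReal
  set a : ℝ := (f (x (k+1))).toReal
  set b : ℝ := (f (x (k+2))).toReal
  -- subgradient inequality from the prox step at k+1
  have hsub := prox_subgrad' hτ hf₂ hf₁ (hx (k+1)) (x (k+1))
  rw [heq] at hsub
  rw [hfa, hfb, ← EReal.coe_add, EReal.coe_le_coe_iff] at hsub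
  -- rewrite the inner product in hsub
  have e : ⟪(1/τ) • ((x (k+1) - τ • (ContinuousLinearMap.adjoint L) (y (k+1))) - x (k+2)),
        x (k+1) - x (k+2)⟫
      = (1/τ) * ‖x (k+2) - x (k+1)‖ ^ 2
        + (⟪y (k+1), L (x (k+2))⟫ - ⟪y (k+1), L (x (k+1))⟫) := by
    have h1 : (x (k+1) - τ • (ContinuousLinearMap.adjoint L) (y (k+1))) - x (k+2)
        = (x (k+1) - x (k+2)) - τ • (ContinuousLinearMap.adjoint L) (y (k+1)) := by abel
    rw [h1, real_inner_smul_left, inner_sub_left, real_inner_smul_left,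
      ContinuousLinearMap.adjoint_inner_left, real_inner_self_eq_norm_sq,
      map_sub, inner_sub_right, norm_sub_rev]
    field_simp
    ring
  rw [e] at hsub
  -- reduce the goal to a real inequality
  rw [hF (k+1), hF k, heq, hfa, hfb, hfs]
  norm_cast
  simp only [inner_sub_left, inner_sub_right, map_sub,
    ContinuousLinearMap.adjoint_inner_left] at *
  linarith [hsub]
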